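/- Let G be a group with word length ∥·∥ and word metric d coming from a symmetric generating set (possibly infinite), let r, s, w ∈ G with r = w s w⁻¹, and let L₁ ≥ 0. Let g₀ = 1, g₁, …, g_N = r be a geodesic from the identity to r (so N = ∥r∥ and d(g_i, g_j) = |i − j| for all i, j), and suppose that both w and ws lie within distance L₁ of the set {g₀, …, g_N}. Then (∥r∥ − ∥s∥)/2 ≤ ∥w∥ ≤ (∥r∥ + ∥s∥)/2 + 2L₁. -/
import Mathlib


/-- The word length of `g` with respect to a generating set `S`: the least `n` such that
`g` is a product of `n` elements of `S`. -/
noncomputable def wordLength {G : Type*} [Group G] (S : Set G) (g : G) : ℕ :=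
  sInf {n : ℕ | ∃ l : List G, (∀ x ∈ l, x ∈ S) ∧ l.length = n ∧ l.prod = g}

/-- The word metric `d(x,y) = ∥x⁻¹ y∥` associated to the generating set `S`. -/
noncomputable def wordDist {G : Type*} [Group G] (S : Set G) (x y : G) : ℕ :=
  wordLength S (x⁻¹ * y)

/-- A geodesic in the (integer-valued) word metric: a finite sequence
`γ 0, γ 1, …, γ N` with `d(γ i, γ j) = |i - j|` for all `i, j`. -/
def IsWordGeodesic {G : Type*} [Group G] (S : Set G) (N : ℕ) (γ : Fin (N + 1) → G) : Prop :=
  ∀ i j : Fin (N + 1), (wordDist S (γ i) (γ j) : ℤ) = |(i : ℤ) - (j : ℤ)|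

section Aux

variable {G : Type*} [Group G] {S : Set G}

lemma exists_word (hSsymm : ∀ s ∈ S, s⁻¹ ∈ S) (hSgen : Subgroup.closure S = ⊤) (g : G) :
    ∃ l : List G, (∀ x ∈ l, x ∈ S) ∧ l.prod = g := by
  have hg : g ∈ Subgroup.closure S := hSgen ▸ Subgroup.mem_top g
  induction hg using Subgroup.closure_induction with
  | mem x hx => exact ⟨[x], by simp [hx]⟩
  | one => exact ⟨[], by simp⟩
  | mul x y _ _ hx hy =>
      obtain ⟨l1, h1, h1p⟩ := hx
      obtain ⟨l2, h2, h2p⟩ := hy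
      refine ⟨l1 ++ l2, ?_, by simp [h1p, h2p]⟩
      intro z hz
      rcases List.mem_append.1 hz with h | h
      · exact h1 z h
      · exact h2 z h
  | inv x _ hx =>
      obtain ⟨l, h1, h1p⟩ := hx
      refine ⟨(l.map fun x => x⁻¹).reverse, ?_, ?_⟩
      · intro y hy
        simp only [List.mem_reverse, List.mem_map] at hy
        obtain ⟨z, hz, rfl⟩ := hy
        exact hSsymm z (h1 z hz)
      · rw [← List.prod_inv_reverse, h1p]

lemma wordLength_set_nonempty (hSsymm : ∀ s ∈ S, s⁻¹ ∈ S)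
    (hSgen : Subgroup.closure S = ⊤) (g : G) :
    {n : ℕ | ∃ l : List G, (∀ x ∈ l, x ∈ S) ∧ l.length = n ∧ l.prod = g}.Nonempty := by
  obtain ⟨l, hl, hlp⟩ := exists_word hSsymm hSgen g
  exact ⟨l.length, l, hl, rfl, hlp⟩

lemma exists_min_word (hSsymm : ∀ s ∈ S, s⁻¹ ∈ S) (hSgen : Subgroup.closure S = ⊤) (g : G) :
    ∃ l : List G, (∀ x ∈ l, x ∈ S) ∧ l.length = wordLength S g ∧ l.prod = g :=
  Nat.sInf_mem (wordLength_set_nonempty hSsymm hSgen g)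

lemma wordLength_le_of_word {l : List G} (hl : ∀ x ∈ l, x ∈ S) :
    wordLength S l.prod ≤ l.length :=
  Nat.sInf_le ⟨l, hl, rfl, rfl⟩

lemma wordLength_mul_le (hSsymm : ∀ s ∈ S, s⁻¹ ∈ S) (hSgen : Subgroup.closure S = ⊤)
    (a b : G) : wordLength S (a * b) ≤ wordLength S a + wordLength S b := by
  obtain ⟨l1, h1, h1len, h1p⟩ := exists_min_word hSsymm hSgen a
  obtain ⟨l2, h2, h2len, h2p⟩ := exists_min_word hSsymm hSgen b
  have : wordLength S ((l1 ++ l2).prod) ≤ (l1 ++ l2).length := by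
    apply wordLength_le_of_word
    intro z hz
    rcases List.mem_append.1 hz with h | h
    · exact h1 z h
    · exact h2 z h
  simpa [h1p, h2p, h1len, h2len] using this

lemma wordLength_inv_le (hSsymm : ∀ s ∈ S, s⁻¹ ∈ S) (hSgen : Subgroup.closure S = ⊤)
    (a : G) : wordLength S a⁻¹ ≤ wordLength S a := by
  obtain ⟨l, hl, hlen, hp⟩ := exists_min_word hSsymm hSgen a
  have hmem : ∀ x ∈ (l.map fun x => x⁻¹).reverse, x ∈ S := by
    intro y hy
    simp only [List.mem_reverse, List.mem_map] at hy
    obtain ⟨z, hz, rfl⟩ := hy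
    exact hSsymm z (hl z hz)
  have := wordLength_le_of_word hmem
  rw [← List.prod_inv_reverse, hp] at this
  simpa [hlen] using this

lemma wordLength_inv (hSsymm : ∀ s ∈ S, s⁻¹ ∈ S) (hSgen : Subgroup.closure S = ⊤)
    (a : G) : wordLength S a⁻¹ = wordLength S a :=
  le_antisymm (wordLength_inv_le hSsymm hSgen a)
    (by simpa using wordLength_inv_le hSsymm hSgen a⁻¹)

lemma wordDist_triangle (hSsymm : ∀ s ∈ S, s⁻¹ ∈ S) (hSgen : Subgroup.closure S = ⊤)
    (x y z : G) : wordDist S x z ≤ wordDist S x y + wordDist S y z := by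
  have := wordLength_mul_le hSsymm hSgen (x⁻¹ * y) (y⁻¹ * z)
  simpa [wordDist, mul_assoc] using this

lemma wordDist_comm (hSsymm : ∀ s ∈ S, s⁻¹ ∈ S) (hSgen : Subgroup.closure S = ⊤)
    (x y : G) : wordDist S x y = wordDist S y x := by
  have := wordLength_inv hSsymm hSgen (x⁻¹ * y)
  simpa [wordDist, mul_inv_rev] using this.symm

end Aux

/-- If `r = w s w⁻¹`, and both `w` and `ws` lie within distance `L₁` of (the image of) a
geodesic `γ 0 = 1, …, γ N = r` from the identity to `r` in the word metric of a symmetric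
generating set `S`, then `(∥r∥ - ∥s∥)/2 ≤ ∥w∥ ≤ (∥r∥ + ∥s∥)/2 + 2 L₁`. -/
theorem statement2 {G : Type*} [Group G]
    (S : Set G) (hSsymm : ∀ s ∈ S, s⁻¹ ∈ S) (hSgen : Subgroup.closure S = ⊤)
    (r s w : G) (hconj : r = w * s * w⁻¹)
    (L₁ : ℝ) (hL₁ : 0 ≤ L₁)
    (N : ℕ) (γ : Fin (N + 1) → G) (hgeo : IsWordGeodesic S N γ)
    (h0 : γ 0 = 1) (hN : γ (Fin.last N) = r)
    (hw : ∃ i : Fin (N + 1), (wordDist S w (γ i) : ℝ) ≤ L₁)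
    (hws : ∃ i : Fin (N + 1), (wordDist S (w * s) (γ i) : ℝ) ≤ L₁) :
    ((wordLength S r : ℝ) - (wordLength S s : ℝ)) / 2 ≤ (wordLength S w : ℝ) ∧
      (wordLength S w : ℝ) ≤ ((wordLength S r : ℝ) + (wordLength S s : ℝ)) / 2 + 2 * L₁ := by
  obtain ⟨i, hi⟩ := hw
  obtain ⟨j, hj⟩ := hws
  -- ∥γ k∥ = k and d(γ k, r) = N - k
  have hlen : ∀ k : Fin (N + 1), (wordLength S (γ k) : ℤ) = (k : ℤ) := by
    intro k
    have h := hgeo 0 k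
    rw [h0] at h
    simp only [wordDist, inv_one, one_mul, Fin.val_zero, Nat.cast_zero, Int.ofNat_zero,
      zero_sub, abs_neg] at h
    rw [h, abs_of_nonneg (by positivity)]
  have hdist : ∀ k : Fin (N + 1), (wordDist S (γ k) r : ℤ) = (N : ℤ) - (k : ℤ) := by
    intro k
    have := hgeo k (Fin.last N)
    rw [hN] at this
    have hk : (k : ℤ) ≤ N := by exact_mod_cast Nat.le_of_lt_succ k.isLt
    simpa [Fin.val_last, abs_of_nonpos (by omega : (k : ℤ) - N ≤ 0)] using this
  have hNr : (N : ℤ) = (wordLength S r : ℤ) := by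
    have := hdist 0
    simp only [Fin.val_zero, Int.ofNat_zero, sub_zero] at this
    rw [← this]
    simp [wordDist, h0]
  -- triangle inequality facts
  have tri := wordDist_triangle hSsymm hSgen (S := S)
  have comm := wordDist_comm hSsymm hSgen (S := S)
  -- lower bound: ∥r∥ ≤ 2∥w∥ + ∥s∥
  have hlow : (wordLength S r : ℝ) ≤ 2 * wordLength S w + wordLength S s := by
    have h1 : wordLength S r ≤ wordLength S (w * s) + wordLength S w⁻¹ := by
      rw [hconj]; exact wordLength_mul_le hSsymm hSgen _ _
    have h2 : wordLength S (w * s) ≤ wordLength S w + wordLength S s :=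
      wordLength_mul_le hSsymm hSgen _ _
    have h3 : wordLength S w⁻¹ = wordLength S w := wordLength_inv hSsymm hSgen w
    have : wordLength S r ≤ 2 * wordLength S w + wordLength S s := by omega
    exact_mod_cast this
  constructor
  · linarith
  -- upper bound
  · -- ∥w∥ ≤ i + L₁
    have hw1 : (wordLength S w : ℝ) ≤ (i : ℤ) + L₁ := by
      have h1 : wordLength S w ≤ wordDist S 1 (γ i) + wordDist S (γ i) w := by
        have := tri 1 (γ i) w
        simpa [wordDist] using this
      have h2 : (wordDist S 1 (γ i) : ℤ) = (i : ℤ) := by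
        rw [← hlen i]; simp [wordDist]
      have h3 : (wordDist S (γ i) w : ℝ) ≤ L₁ := by rw [comm (γ i) w]; exact hi
      have h1' : (wordLength S w : ℝ) ≤ (wordDist S 1 (γ i) : ℝ) + (wordDist S (γ i) w : ℝ) := by
        exact_mod_cast h1
      have h2' : ((wordDist S 1 (γ i) : ℤ) : ℝ) = ((i : ℤ) : ℝ) := by exact_mod_cast h2
      push_cast at h1' h2' ⊢
      linarith
    -- ∥w∥ = d(ws, r) ≤ L₁ + (N - j)
    have hw2 : (wordLength S w : ℝ) ≤ L₁ + ((N : ℤ) - (j : ℤ)) := by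
      have key : wordDist S (w * s) r = wordLength S w := by
        have : (w * s)⁻¹ * r = w⁻¹ := by
          rw [hconj]; group
        rw [wordDist, this, wordLength_inv hSsymm hSgen]
      have h1 : wordDist S (w * s) r ≤ wordDist S (w * s) (γ j) + wordDist S (γ j) r :=
        tri _ _ _
      have h2 : ((wordDist S (γ j) r : ℤ) : ℝ) = (N : ℤ) - (j : ℤ) := by
        exact_mod_cast hdist j
      have h1' : ((wordDist S (w * s) r : ℕ) : ℝ) ≤
          (wordDist S (w * s) (γ j) : ℝ) + (wordDist S (γ j) r : ℝ) := by exact_mod_cast h1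
      rw [key] at h1'
      push_cast at h1' h2 ⊢
      linarith
    -- |i - j| ≤ 2L₁ + ∥s∥
    have hij : ((i : ℤ) : ℝ) - ((j : ℤ) : ℝ) ≤ 2 * L₁ + (wordLength S s : ℝ) := by
      have h1 : wordDist S (γ i) (γ j) ≤
          wordDist S (γ i) w + wordDist S w (w * s) + wordDist S (w * s) (γ j) := by
        calc wordDist S (γ i) (γ j) ≤ wordDist S (γ i) (w * s) + wordDist S (w * s) (γ j) :=
              tri _ _ _
          _ ≤ wordDist S (γ i) w + wordDist S w (w * s) + wordDist S (w * s) (γ j) := by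
              have := tri (γ i) w (w * s)
              omega
      have h2 : wordDist S w (w * s) = wordLength S s := by
        simp [wordDist]
      have h3 : ((wordDist S (γ i) (γ j) : ℤ) : ℝ) = |((i : ℤ) : ℝ) - ((j : ℤ) : ℝ)| := by
        rw [hgeo i j]; push_cast; ring
      have h4 : (wordDist S (γ i) w : ℝ) ≤ L₁ := by rw [comm (γ i) w]; exact hi
      have h1' : ((wordDist S (γ i) (γ j) : ℕ) : ℝ) ≤
          (wordDist S (γ i) w : ℝ) + (wordDist S w (w * s) : ℝ) +
            (wordDist S (w * s) (γ j) : ℝ) := by exact_mod_cast h1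
      have habs : ((i : ℤ) : ℝ) - ((j : ℤ) : ℝ) ≤ |((i : ℤ) : ℝ) - ((j : ℤ) : ℝ)| :=
        le_abs_self _
      rw [h2] at h1'
      push_cast at h1' h3 ⊢
      push_cast at habs
      linarith
    have hNr' : ((N : ℤ) : ℝ) = (wordLength S r : ℝ) := by exact_mod_cast hNr
    push_cast at hw1 hw2 hij hNr' ⊢
    linarith
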